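/- There exists a function χ : [0,∞) → ℝ of class C^∞ such that χ(x) = 0 for x ≤ 1, χ(x) = 1 for x ≥ 2, and the following three integral conditions hold: ∫₀^∞ χ(x)/x³ dx = 0, ∫₀^∞ x³·(1 − χ(x)) dx = 0, and ∫₀^∞ x³·log x·(1 − χ(x)) dx = 0. -/

import Mathlib

open Real MeasureTheory

noncomputable section Stmt7Aux

/-- The three weight functions. -/
private def W7 : Fin 3 → ℝ → ℝ :=
  ![fun x => (x ^ 3)⁻¹, fun x => x ^ 3, fun x => x ^ 3 * Real.log x]

private lemma W7_contOn (i : Fin 3) : ContinuousOn (W7 i) (Set.Ioi 0) := by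
  fin_cases i
  · exact (continuous_pow 3).continuousOn.inv₀ fun x hx =>
      pow_ne_zero _ (ne_of_gt (Set.mem_Ioi.mp hx))
  · exact (continuous_pow 3).continuousOn
  · exact (continuous_pow 3).continuousOn.mul
      (Real.continuousOn_log.mono fun x hx => ne_of_gt (Set.mem_Ioi.mp hx))

/-- Test functions. -/
private def IsTest7 (f : ℝ → ℝ) : Prop :=
  ContDiff ℝ ((⊤:ℕ∞) : WithTop ℕ∞) f ∧ tsupport f ⊆ Set.Ioo 1 2

private lemma test7_zero_outside {f : ℝ → ℝ} (hf : IsTest7 f) {x : ℝ}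
    (hx : x ∉ Set.Ioo (1:ℝ) 2) : f x = 0 :=
  image_eq_zero_of_notMem_tsupport fun h => hx (hf.2 h)

private lemma test7_eq_indicator {f w : ℝ → ℝ} (hf : IsTest7 f) :
    (fun x => f x * w x) = Set.indicator (Set.Icc 1 2) (fun x => f x * w x) := by
  funext x
  by_cases hx : x ∈ Set.Icc (1:ℝ) 2
  · rw [Set.indicator_of_mem hx]
  · rw [Set.indicator_of_notMem hx, test7_zero_outside hf
      (fun h => hx ⟨h.1.le, h.2.le⟩), zero_mul]

private lemma test7_integrableOn {f w : ℝ → ℝ} (hf : IsTest7 f)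
    (hw : ContinuousOn w (Set.Ioi 0)) :
    IntegrableOn (fun x => f x * w x) (Set.Ioi 0) := by
  have hIcc : IntegrableOn (fun x => f x * w x) (Set.Icc 1 2) := by
    apply ContinuousOn.integrableOn_compact isCompact_Icc
    exact hf.1.continuous.continuousOn.mul (hw.mono (fun x hx => lt_of_lt_of_le one_pos hx.1))
  rw [test7_eq_indicator hf]
  exact (hIcc.integrable_indicator measurableSet_Icc).integrableOn

/-- Positivity of a bump integral against a positive weight. -/
private lemma bump_integral_pos {w : ℝ → ℝ} (hw : ContinuousOn w (Set.Ioi 0))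
    {x₀ : ℝ} (hx₀ : x₀ ∈ Set.Ioo (1:ℝ) 2) (hpos : 0 < w x₀) :
    ∃ f, IsTest7 f ∧ 0 < ∫ x in Set.Ioi (0:ℝ), f x * w x := by
  have hx0pos : (0:ℝ) < x₀ := lt_trans one_pos hx₀.1
  have hcont : ContinuousAt w x₀ := hw.continuousAt (isOpen_Ioi.mem_nhds hx0pos)
  have hev : ∀ᶠ x in nhds x₀, 0 < w x := hcont.eventually_mem (isOpen_Ioi.mem_nhds hpos)
  rw [Metric.eventually_nhds_iff] at hev
  obtain ⟨ε, hε, hball⟩ := hev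
  set δ : ℝ := min (ε / 2) (min ((x₀ - 1) / 2) ((2 - x₀) / 2)) with hδdef
  have hδpos : 0 < δ := by
    apply lt_min (by linarith)
    exact lt_min (by linarith [hx₀.1]) (by linarith [hx₀.2])
  have hδε : δ < ε := lt_of_le_of_lt (min_le_left _ _) (by linarith)
  have hδ1 : δ < x₀ - 1 := lt_of_le_of_lt (le_trans (min_le_right _ _) (min_le_left _ _))
    (by linarith [hx₀.1])
  have hδ2 : δ < 2 - x₀ := lt_of_le_of_lt (le_trans (min_le_right _ _) (min_le_right _ _))
    (by linarith [hx₀.2])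
  have hsub : Metric.closedBall x₀ δ ⊆ Set.Ioo 1 2 := by
    intro x hx
    rw [Metric.mem_closedBall, Real.dist_eq, abs_le] at hx
    constructor
    · linarith [hx.1]
    · linarith [hx.2]
  have hwball : ∀ x ∈ Metric.closedBall x₀ δ, 0 < w x := fun x hx =>
    hball (lt_of_le_of_lt (Metric.mem_closedBall.mp hx) hδε)
  set b : ContDiffBump x₀ := ⟨δ / 2, δ, by positivity, by linarith⟩ with hbdef
  have htest : IsTest7 b := by
    refine ⟨b.contDiff (n := (⊤:ℕ∞)), ?_⟩
    rw [b.tsupport_eq]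
    exact hsub
  refine ⟨b, htest, ?_⟩
  have hnn : 0 ≤ᵐ[volume.restrict (Set.Ioi (0:ℝ))] fun x => b x * w x := by
    refine Filter.Eventually.of_forall fun x => ?_
    by_cases hx : x ∈ Metric.closedBall x₀ δ
    · exact mul_nonneg b.nonneg (hwball x hx).le
    · have hbx : b x = 0 := b.zero_of_le_dist (by
        rw [Metric.mem_closedBall, not_le] at hx; exact hx.le)
      simp [hbx]
  have hint : Integrable (fun x => b x * w x) (volume.restrict (Set.Ioi (0:ℝ))) :=
    test7_integrableOn htest hw
  rw [show (∫ x in Set.Ioi (0:ℝ), b x * w x) =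
      ∫ x, b x * w x ∂(volume.restrict (Set.Ioi (0:ℝ))) from rfl]
  rw [integral_pos_iff_support_of_nonneg_ae hnn hint]
  have hss : Metric.ball x₀ δ ⊆ Function.support fun x => b x * w x := by
    intro x hx
    exact mul_ne_zero (ne_of_gt (b.pos_of_mem_ball hx))
      (ne_of_gt (hwball x (Metric.ball_subset_closedBall hx)))
  have hball0 : Metric.ball x₀ δ ⊆ Set.Ioi (0:ℝ) := fun x hx =>
    lt_trans one_pos (hsub (Metric.ball_subset_closedBall hx)).1
  calc (0:ENNReal) < volume (Metric.ball x₀ δ) := Metric.measure_ball_pos _ _ hδpos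
    _ = (volume.restrict (Set.Ioi (0:ℝ))) (Metric.ball x₀ δ) := by
        rw [Measure.restrict_apply measurableSet_ball,
          Set.inter_eq_self_of_subset_left hball0]
    _ ≤ _ := measure_mono hss

/-- If all test integrals vanish, the (continuous) weight vanishes on (1,2). -/
private lemma weight_vanishes {w : ℝ → ℝ} (hw : ContinuousOn w (Set.Ioi 0))
    (h : ∀ f, IsTest7 f → (∫ x in Set.Ioi (0:ℝ), f x * w x) = 0) :
    ∀ x ∈ Set.Ioo (1:ℝ) 2, w x = 0 := by
  intro x hx
  by_contra hne
  rcases lt_or_gt_of_ne hne with hlt | hgt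
  · have hw' : ContinuousOn (fun y => -w y) (Set.Ioi 0) := hw.neg
    obtain ⟨f, hf, hpos⟩ := bump_integral_pos hw' hx (by simpa using hlt)
    have hz : (∫ y in Set.Ioi (0:ℝ), f y * (-w y)) = 0 := by
      have hz0 := h f hf
      rw [show (fun y => f y * (-w y)) = fun y => -(f y * w y) by funext y; ring]
      rw [integral_neg, hz0, neg_zero]
    exact absurd hz (ne_of_gt hpos)
  · obtain ⟨f, hf, hpos⟩ := bump_integral_pos hw hx hgt
    exact absurd (h f hf) (ne_of_gt hpos)

/-- The submodule of achievable integral triples. -/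
private def S7 : Submodule ℝ (EuclideanSpace ℝ (Fin 3)) where
  carrier := {v | ∃ f, IsTest7 f ∧ ∀ i, (∫ x in Set.Ioi (0:ℝ), f x * W7 i x) = v i}
  zero_mem' := by
    refine ⟨fun _ => 0, ⟨contDiff_const, ?_⟩, fun i => by simp⟩
    rw [show tsupport (fun _ : ℝ => (0:ℝ)) = ∅ by
      simp [tsupport, Function.support]]
    exact Set.empty_subset _
  add_mem' := by
    rintro u v ⟨f, hf, hfi⟩ ⟨g, hg, hgi⟩
    refine ⟨f + g, ⟨hf.1.add hg.1, le_trans (tsupport_add f g)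
      (Set.union_subset hf.2 hg.2)⟩, fun i => ?_⟩
    have h1 := test7_integrableOn hf (W7_contOn i)
    have h2 := test7_integrableOn hg (W7_contOn i)
    rw [show (fun x => (f + g) x * W7 i x) = fun x => f x * W7 i x + g x * W7 i x by
      funext x; simp [add_mul]]
    rw [integral_add h1 h2, hfi i, hgi i]
    rfl
  smul_mem' := by
    rintro c v ⟨f, hf, hfi⟩
    refine ⟨c • f, ⟨hf.1.const_smul c, le_trans (tsupport_smul_subset_right (fun _ => c) f)
      hf.2⟩, fun i => ?_⟩
    rw [show (fun x => (c • f) x * W7 i x) = fun x => c * (f x * W7 i x) by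
      funext x; simp [mul_assoc]]
    rw [integral_const_mul, hfi i]
    rfl

private lemma log_ratio_ne : 3 * Real.log 3 - 5 * Real.log 2 ≠ 0 := by
  have h1 : Real.log 27 < Real.log 32 := Real.log_lt_log (by norm_num) (by norm_num)
  have h2 : Real.log 27 = 3 * Real.log 3 := by
    rw [show (27:ℝ) = 3 ^ (3:ℕ) by norm_num, Real.log_pow]; norm_num
  have h3 : Real.log 32 = 5 * Real.log 2 := by
    rw [show (32:ℝ) = 2 ^ (5:ℕ) by norm_num, Real.log_pow]; norm_num
  rw [h2, h3] at h1
  linarith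

/-- Evaluation point `r^(1/6)` lies in (1,2). -/
private lemma eval_point (r : ℝ) (hr1 : 1 < r) (hr64 : r < 64) :
    ∃ a : ℝ, a ∈ Set.Ioo (1:ℝ) 2 ∧ a ^ (6:ℕ) = r ∧ Real.log a = (6:ℝ)⁻¹ * Real.log r := by
  have hrpos : (0:ℝ) < r := lt_trans one_pos hr1
  have h6 : ((r:ℝ) ^ ((6:ℝ)⁻¹)) ^ (6:ℕ) = r := by
    rw [show ((6:ℝ)⁻¹) = (((6:ℕ):ℝ))⁻¹ by norm_num]
    exact Real.rpow_inv_natCast_pow hrpos.le (by norm_num)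
  refine ⟨r ^ ((6:ℝ)⁻¹), ⟨?_, ?_⟩, h6, ?_⟩
  · rw [Real.one_lt_rpow_iff_of_pos hrpos]
    left; exact ⟨hr1, by norm_num⟩
  · by_contra hle
    push_neg at hle
    have hmono : (2:ℝ) ^ (6:ℕ) ≤ (r ^ ((6:ℝ)⁻¹)) ^ (6:ℕ) :=
      pow_le_pow_left₀ (by norm_num) hle 6
    rw [h6] at hmono
    norm_num at hmono
    linarith
  · rw [Real.log_rpow hrpos]

/-- The key equation at an evaluation point. -/
private lemma eval_eq (u0 u1 u2 : ℝ)
    (hvan : ∀ x ∈ Set.Ioo (1:ℝ) 2,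
      u0 * (x ^ 3)⁻¹ + u1 * x ^ 3 + u2 * (x ^ 3 * Real.log x) = 0)
    (r : ℝ) (hr1 : 1 < r) (hr64 : r < 64) :
    u0 + u1 * r + u2 * (r * ((6:ℝ)⁻¹ * Real.log r)) = 0 := by
  obtain ⟨a, ha, ha6, halog⟩ := eval_point r hr1 hr64
  have h := hvan a ha
  have hapos : (0:ℝ) < a := lt_trans one_pos ha.1
  have ha3 : (0:ℝ) < a ^ 3 := by positivity
  have key : a ^ 3 * (u0 * (a ^ 3)⁻¹ + u1 * a ^ 3 + u2 * (a ^ 3 * Real.log a)) = 0 := by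
    rw [h, mul_zero]
  have ha33 : a ^ 3 * a ^ 3 = r := by rw [← pow_add]; exact ha6
  have hinv : a ^ 3 * (a ^ 3)⁻¹ = 1 := mul_inv_cancel₀ (ne_of_gt ha3)
  calc u0 + u1 * r + u2 * (r * ((6:ℝ)⁻¹ * Real.log r))
      = u0 * (a ^ 3 * (a ^ 3)⁻¹) + u1 * (a ^ 3 * a ^ 3)
        + u2 * ((a ^ 3 * a ^ 3) * Real.log a) := by
        rw [hinv, ha33, halog]; ring
    _ = a ^ 3 * (u0 * (a ^ 3)⁻¹ + u1 * a ^ 3 + u2 * (a ^ 3 * Real.log a)) := by ring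
    _ = 0 := key

/-- S7 is everything. -/
private lemma S7_top : S7 = ⊤ := by
  by_contra hne
  have hbot : S7ᗮ ≠ ⊥ := fun h => hne (Submodule.orthogonal_eq_bot_iff.mp h)
  obtain ⟨u, hu, hune⟩ := Submodule.exists_mem_ne_zero_of_ne_bot hbot
  set w : ℝ → ℝ := fun x => u 0 * (x ^ 3)⁻¹ + u 1 * x ^ 3 + u 2 * (x ^ 3 * Real.log x)
    with hwdef
  have hwcont : ContinuousOn w (Set.Ioi 0) := by
    have h0 := W7_contOn 0
    have h1 := W7_contOn 1
    have h2 := W7_contOn 2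
    simp only [W7, Matrix.cons_val_zero, Matrix.cons_val_one, Matrix.head_cons,
      Matrix.cons_val_two, Matrix.tail_cons] at h0 h1 h2
    exact ((h0.const_smul (u 0)).add (h1.const_smul (u 1))).add (h2.const_smul (u 2))
  have hzero : ∀ f, IsTest7 f → (∫ x in Set.Ioi (0:ℝ), f x * w x) = 0 := by
    intro f hf
    have hv : (WithLp.toLp 2 (fun i => ∫ x in Set.Ioi (0:ℝ), f x * W7 i x) : EuclideanSpace ℝ (Fin 3)) ∈ S7 := ⟨f, hf, fun i => rfl⟩
    have hinner := (Submodule.mem_orthogonal S7 u).mp hu _ hv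
    rw [PiLp.inner_apply] at hinner
    simp only [RCLike.inner_apply, starRingEnd_apply, star_trivial] at hinner
    rw [Fin.sum_univ_three] at hinner
    have i0 := test7_integrableOn hf (W7_contOn 0)
    have i1 := test7_integrableOn hf (W7_contOn 1)
    have i2 := test7_integrableOn hf (W7_contOn 2)
    simp only [W7, Matrix.cons_val_zero, Matrix.cons_val_one, Matrix.head_cons,
      Matrix.cons_val_two, Matrix.tail_cons] at i0 i1 i2 hinner
    have e : (fun x => f x * w x) = fun x => u 0 * (f x * (x ^ 3)⁻¹)
        + (u 1 * (f x * x ^ 3) + u 2 * (f x * (x ^ 3 * Real.log x))) := by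
      funext x; simp only [hwdef]; ring
    have i12 : Integrable (fun x => u 1 * (f x * x ^ 3) + u 2 * (f x * (x ^ 3 * Real.log x)))
        (volume.restrict (Set.Ioi 0)) := (i1.const_mul _).add (i2.const_mul _)
    rw [e, integral_add (i0.const_mul _) i12,
      integral_add (i1.const_mul _) (i2.const_mul _),
      integral_const_mul, integral_const_mul, integral_const_mul]
    linarith [hinner]
  have hvan := weight_vanishes hwcont hzero
  have hlog4 : Real.log 4 = 2 * Real.log 2 := by
    rw [show (4:ℝ) = 2 ^ (2:ℕ) by norm_num, Real.log_pow]; norm_num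
  have E2 := eval_eq (u 0) (u 1) (u 2) hvan 2 (by norm_num) (by norm_num)
  have E3 := eval_eq (u 0) (u 1) (u 2) hvan 3 (by norm_num) (by norm_num)
  have E4 := eval_eq (u 0) (u 1) (u 2) hvan 4 (by norm_num) (by norm_num)
  rw [hlog4] at E4
  have hu2 : u 2 * ((3 * Real.log 3 - 5 * Real.log 2) / 3) = 0 := by
    linear_combination 2 * E3 - E4 - E2
  have hu2z : u 2 = 0 := by
    rcases mul_eq_zero.mp hu2 with h | h
    · exact h
    · exact absurd (by linarith : 3 * Real.log 3 - 5 * Real.log 2 = 0) log_ratio_ne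
  rw [hu2z] at E2 E3
  have hu1z : u 1 = 0 := by linarith
  have hu0z : u 0 = 0 := by linarith
  apply hune
  ext i
  fin_cases i
  · simpa using hu0z
  · simpa using hu1z
  · simpa using hu2z

/-- The smooth step. -/
private def ψ7 : ℝ → ℝ := fun x => Real.smoothTransition (x - 1)

private lemma ψ7_contDiff : ContDiff ℝ ((⊤:ℕ∞) : WithTop ℕ∞) ψ7 :=
  Real.smoothTransition.contDiff.comp (contDiff_id.sub contDiff_const)

private lemma ψ7_zero {x : ℝ} (hx : x ≤ 1) : ψ7 x = 0 :=
  Real.smoothTransition.zero_of_nonpos (by linarith)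

private lemma ψ7_one {x : ℝ} (hx : 2 ≤ x) : ψ7 x = 1 :=
  Real.smoothTransition.one_of_one_le (by linarith)

private lemma ψ7_nonneg (x : ℝ) : 0 ≤ ψ7 x := Real.smoothTransition.nonneg _

private lemma ψ7_le_one (x : ℝ) : ψ7 x ≤ 1 := Real.smoothTransition.le_one _

/-- Integrability of ψ7 against w1 on (0,∞). -/
private lemma ψ7_int1 : IntegrableOn (fun x => ψ7 x * (x ^ 3)⁻¹) (Set.Ioi 0) := by
  have hsplit : Set.Ioc (0:ℝ) 1 ∪ Set.Ioi 1 = Set.Ioi 0 := Set.Ioc_union_Ioi_eq_Ioi zero_le_one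
  rw [← hsplit]
  apply IntegrableOn.union
  · apply (integrableOn_congr_fun (fun x hx => ?_) measurableSet_Ioc).mpr
      (integrableOn_zero (s := Set.Ioc (0:ℝ) 1))
    rw [ψ7_zero hx.2, zero_mul]
  · have hig : IntegrableOn (fun x : ℝ => x ^ (-3 : ℝ)) (Set.Ioi 1) := by
      rw [integrableOn_Ioi_rpow_iff one_pos]
      norm_num
    apply Integrable.mono' hig
    · apply AEStronglyMeasurable.mul
      · exact (ψ7_contDiff.continuous.aestronglyMeasurable).restrict
      · exact ((measurable_id.pow_const 3).inv).aestronglyMeasurable.restrict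
    · refine (ae_restrict_iff' measurableSet_Ioi).mpr (Filter.Eventually.of_forall ?_)
      intro x hx
      have hx0 : (0:ℝ) < x := lt_trans one_pos hx
      have hrw : x ^ (-3 : ℝ) = (x ^ (3:ℕ))⁻¹ := by
        rw [Real.rpow_neg hx0.le, ← Real.rpow_natCast x 3]; norm_num
      rw [hrw, norm_mul]
      have h1 : ‖ψ7 x‖ ≤ 1 := by
        rw [Real.norm_eq_abs, abs_of_nonneg (ψ7_nonneg x)]; exact ψ7_le_one x
      have h2 : ‖(x ^ (3:ℕ))⁻¹‖ = (x ^ (3:ℕ))⁻¹ := by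
        rw [Real.norm_eq_abs, abs_of_nonneg (by positivity)]
      calc ‖ψ7 x‖ * ‖(x ^ (3:ℕ))⁻¹‖ ≤ 1 * ‖(x ^ (3:ℕ))⁻¹‖ := by
            apply mul_le_mul_of_nonneg_right h1 (norm_nonneg _)
        _ = (x ^ (3:ℕ))⁻¹ := by rw [one_mul, h2]

/-- Integrability of x³(1-ψ7). -/
private lemma ψ7_int2 : IntegrableOn (fun x => x ^ 3 * (1 - ψ7 x)) (Set.Ioi 0) := by
  have hsplit : Set.Ioc (0:ℝ) 2 ∪ Set.Ioi 2 = Set.Ioi 0 := Set.Ioc_union_Ioi_eq_Ioi (by norm_num)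
  rw [← hsplit]
  apply IntegrableOn.union
  · exact ((continuous_pow 3).mul (continuous_const.sub ψ7_contDiff.continuous)).integrableOn_Ioc
  · apply (integrableOn_congr_fun (fun x hx => ?_) measurableSet_Ioi).mpr
      (integrableOn_zero (s := Set.Ioi (2:ℝ)))
    rw [ψ7_one (le_of_lt hx), sub_self, mul_zero]

/-- Bound for x³ log x on (0,2]. -/
private lemma cube_log_bound {x : ℝ} (hx0 : 0 < x) (hx2 : x ≤ 2) :
    |x ^ 3 * Real.log x| ≤ 8 := by
  rcases le_or_gt x 1 with h1 | h1
  · have hlog : Real.log x ≤ 0 := Real.log_nonpos hx0.le h1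
    have habs : |x ^ 3 * Real.log x| = x ^ 3 * (-Real.log x) := by
      rw [abs_of_nonpos (mul_nonpos_of_nonneg_of_nonpos (by positivity) hlog)]; ring
    rw [habs]
    have hloginv : -Real.log x ≤ x⁻¹ := by
      have := Real.log_le_sub_one_of_pos (show (0:ℝ) < x⁻¹ by positivity)
      rw [Real.log_inv] at this
      have hxinv : x⁻¹ - 1 ≤ x⁻¹ := by linarith
      linarith
    calc x ^ 3 * (-Real.log x) ≤ x ^ 3 * x⁻¹ :=
          mul_le_mul_of_nonneg_left hloginv (by positivity)
      _ = x ^ 2 := by field_simp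
      _ ≤ 1 := by nlinarith
      _ ≤ 8 := by norm_num
  · have hlog0 : 0 ≤ Real.log x := Real.log_nonneg h1.le
    have hlog2 : Real.log x ≤ 1 := by
      have := Real.log_le_sub_one_of_pos hx0
      linarith
    rw [abs_of_nonneg (mul_nonneg (by positivity) hlog0)]
    calc x ^ 3 * Real.log x ≤ x ^ 3 * 1 := mul_le_mul_of_nonneg_left hlog2 (by positivity)
      _ = x ^ 3 := mul_one _
      _ ≤ 8 := by nlinarith [mul_nonneg (sub_nonneg.mpr hx2) (by positivity : (0:ℝ) ≤ 4 + 2*x + x^2)]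

/-- Integrability of x³ log x (1-ψ7). -/
private lemma ψ7_int3 : IntegrableOn (fun x => x ^ 3 * Real.log x * (1 - ψ7 x)) (Set.Ioi 0) := by
  have hsplit : Set.Ioc (0:ℝ) 2 ∪ Set.Ioi 2 = Set.Ioi 0 := Set.Ioc_union_Ioi_eq_Ioi (by norm_num)
  rw [← hsplit]
  apply IntegrableOn.union
  · apply Integrable.mono' (g := fun _ : ℝ => (8:ℝ))
      ((integrableOn_const_iff (C := (8:ℝ)) (by finiteness)).mpr (Or.inr measure_Ioc_lt_top))
    · apply AEStronglyMeasurable.mul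
      · exact (((measurable_id.pow_const 3).mul Real.measurable_log)).aestronglyMeasurable.restrict
      · exact (continuous_const.sub ψ7_contDiff.continuous).aestronglyMeasurable.restrict
    · refine (ae_restrict_iff' measurableSet_Ioc).mpr (Filter.Eventually.of_forall ?_)
      intro x hx
      rw [norm_mul]
      have h1 : ‖(1 - ψ7 x)‖ ≤ 1 := by
        rw [Real.norm_eq_abs, abs_of_nonneg (by linarith [ψ7_le_one x])]
        linarith [ψ7_nonneg x]
      calc ‖x ^ 3 * Real.log x‖ * ‖1 - ψ7 x‖ ≤ ‖x ^ 3 * Real.log x‖ * 1 :=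
            mul_le_mul_of_nonneg_left h1 (norm_nonneg _)
        _ = |x ^ 3 * Real.log x| := by rw [mul_one, Real.norm_eq_abs]
        _ ≤ 8 := cube_log_bound hx.1 hx.2
  · apply (integrableOn_congr_fun (fun x hx => ?_) measurableSet_Ioi).mpr
      (integrableOn_zero (s := Set.Ioi (2:ℝ)))
    rw [ψ7_one (le_of_lt hx), sub_self, mul_zero]

end Stmt7Aux

/-- Existence of a smooth cutoff χ on [0,∞), with χ = 0 on [0,1], χ = 1 on [2,∞),
satisfying the three orthogonality-type integral conditions. -/
theorem stmt7 :
    ∃ χ : ℝ → ℝ, ContDiffOn ℝ (⊤ : ℕ∞) χ (Set.Ici 0) ∧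
      (∀ x, 0 ≤ x → x ≤ 1 → χ x = 0) ∧
      (∀ x, 2 ≤ x → χ x = 1) ∧
      (∫ x in Set.Ioi (0:ℝ), χ x / x^3) = 0 ∧
      (∫ x in Set.Ioi (0:ℝ), x^3 * (1 - χ x)) = 0 ∧
      (∫ x in Set.Ioi (0:ℝ), x^3 * Real.log x * (1 - χ x)) = 0 := by
  classical
  set c₁ : ℝ := ∫ x in Set.Ioi (0:ℝ), ψ7 x * (x ^ 3)⁻¹ with hc₁
  set c₂ : ℝ := ∫ x in Set.Ioi (0:ℝ), x ^ 3 * (1 - ψ7 x) with hc₂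
  set c₃ : ℝ := ∫ x in Set.Ioi (0:ℝ), x ^ 3 * Real.log x * (1 - ψ7 x) with hc₃
  have hvmem : (show EuclideanSpace ℝ (Fin 3) from WithLp.toLp 2 ![-c₁, c₂, c₃]) ∈ S7 := by
    rw [S7_top]; exact Submodule.mem_top
  obtain ⟨f, hf, hfi⟩ := hvmem
  have hI0 : (∫ x in Set.Ioi (0:ℝ), f x * (x ^ 3)⁻¹) = -c₁ := by
    have := hfi 0
    simpa [W7] using this
  have hI1 : (∫ x in Set.Ioi (0:ℝ), f x * x ^ 3) = c₂ := by
    have := hfi 1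
    simpa [W7] using this
  have hI2 : (∫ x in Set.Ioi (0:ℝ), f x * (x ^ 3 * Real.log x)) = c₃ := by
    have := hfi 2
    simpa [W7] using this
  have if0 := test7_integrableOn hf (W7_contOn 0)
  have if1 := test7_integrableOn hf (W7_contOn 1)
  have if2 := test7_integrableOn hf (W7_contOn 2)
  simp only [W7, Matrix.cons_val_zero, Matrix.cons_val_one, Matrix.head_cons,
    Matrix.cons_val_two, Matrix.tail_cons] at if0 if1 if2
  refine ⟨fun x => ψ7 x + f x, ?_, ?_, ?_, ?_, ?_, ?_⟩
  · exact (ψ7_contDiff.add hf.1).contDiffOn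
  · intro x hx0 hx1
    show ψ7 x + f x = 0
    rw [ψ7_zero hx1, test7_zero_outside hf (fun h => absurd h.1 (not_lt.mpr hx1)), add_zero]
  · intro x hx2
    show ψ7 x + f x = 1
    rw [ψ7_one hx2, test7_zero_outside hf (fun h => absurd h.2 (not_lt.mpr hx2)), add_zero]
  · have e : (fun x : ℝ => (ψ7 x + f x) / x ^ 3)
        = fun x => ψ7 x * (x ^ 3)⁻¹ + f x * (x ^ 3)⁻¹ := by
      funext x; ring
    rw [e, integral_add ψ7_int1 if0, hI0, ← hc₁]
    ring
  · have e : (fun x : ℝ => x ^ 3 * (1 - (ψ7 x + f x)))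
        = fun x => x ^ 3 * (1 - ψ7 x) - f x * x ^ 3 := by
      funext x; ring
    rw [e, integral_sub ψ7_int2 if1, hI1, ← hc₂]
    ring
  · have e : (fun x : ℝ => x ^ 3 * Real.log x * (1 - (ψ7 x + f x)))
        = fun x => x ^ 3 * Real.log x * (1 - ψ7 x) - f x * (x ^ 3 * Real.log x) := by
      funext x; ring
    rw [e, integral_sub ψ7_int3 if2, hI2, ← hc₃]
    ring
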